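/- arXiv:1707.05659 — 3 statements merged into one kernel-verified Lean document; each statement's English description precedes it below -/
import Mathlib

section
/- Let u : ℝ × ℝ → ℂ be twice continuously differentiable. Then u satisfies the focusing NLS equation i u_t + u_xx + 2|u|² u = 0 at every point (x,t) if and only if the zero-curvature equation ∂_t U(λ,x,t) − ∂_x V(λ,x,t) + U(λ,x,t)·V(λ,x,t) − V(λ,x,t)·U(λ,x,t) = 0 holds for every λ ∈ ℂ and every (x,t) ∈ ℝ × ℝ. -/
open Complex

/-- Partial derivative in `x` of a function `u : ℝ × ℝ → ℂ`. -/
noncomputable def pdx (u : ℝ × ℝ → ℂ) (x t : ℝ) : ℂ := deriv (fun s : ℝ => u (s, t)) x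

/-- Second partial derivative in `x`. -/
noncomputable def pdxx (u : ℝ × ℝ → ℂ) (x t : ℝ) : ℂ := deriv (fun s : ℝ => pdx u s t) x

/-- Partial derivative in `t`. -/
noncomputable def pdt (u : ℝ × ℝ → ℂ) (x t : ℝ) : ℂ := deriv (fun s : ℝ => u (x, s)) t

/-- The matrix `U(λ,x,t)` of the Zakharov–Shabat zero-curvature representation. -/
noncomputable def ZSU (u : ℝ × ℝ → ℂ) (lam : ℂ) (x t : ℝ) : Matrix (Fin 2) (Fin 2) ℂ :=
  !![-Complex.I * lam, Complex.I * u (x, t);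
     Complex.I * (starRingEnd ℂ) (u (x, t)), Complex.I * lam]

/-- The matrix `V(λ,x,t)` of the Zakharov–Shabat zero-curvature representation. -/
noncomputable def ZSV (u : ℝ × ℝ → ℂ) (lam : ℂ) (x t : ℝ) : Matrix (Fin 2) (Fin 2) ℂ :=
  !![-2 * Complex.I * lam ^ 2 + Complex.I * ((‖u (x, t)‖ : ℂ)) ^ 2,
       2 * Complex.I * lam * u (x, t) - pdx u x t;
     2 * Complex.I * lam * (starRingEnd ℂ) (u (x, t)) + (starRingEnd ℂ) (pdx u x t),
       2 * Complex.I * lam ^ 2 - Complex.I * ((‖u (x, t)‖ : ℂ)) ^ 2]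

lemma absSq (z : ℂ) : ((‖z‖ : ℂ))^2 = z * (starRingEnd ℂ) z := by
  rw [← Complex.ofReal_pow, Complex.sq_norm, Complex.mul_conj]

lemma hasDerivAt_pdx (u : ℝ × ℝ → ℂ) (hu : ContDiff ℝ 2 u) (x t : ℝ) :
    HasDerivAt (fun s : ℝ => u (s, t)) (pdx u x t) x := by
  have hdiff : Differentiable ℝ (fun s : ℝ => u (s, t)) :=
    (hu.differentiable (by norm_num)).comp (differentiable_id.prodMk (differentiable_const t))
  exact (hdiff x).hasDerivAt

lemma hasDerivAt_pdt (u : ℝ × ℝ → ℂ) (hu : ContDiff ℝ 2 u) (x t : ℝ) :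
    HasDerivAt (fun s : ℝ => u (x, s)) (pdt u x t) t := by
  have hdiff : Differentiable ℝ (fun s : ℝ => u (x, s)) :=
    (hu.differentiable (by norm_num)).comp ((differentiable_const x).prodMk differentiable_id)
  exact (hdiff t).hasDerivAt

lemma pdx_eq_fderiv (u : ℝ × ℝ → ℂ) (hu : ContDiff ℝ 2 u) (x t : ℝ) :
    pdx u x t = fderiv ℝ u (x, t) ((1:ℝ), (0:ℝ)) := by
  have h1 : HasDerivAt (fun s : ℝ => ((s, t) : ℝ × ℝ)) ((1:ℝ), (0:ℝ)) x :=
    HasDerivAt.prodMk (hasDerivAt_id x) (hasDerivAt_const x t)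
  have h2 : HasDerivAt (fun s : ℝ => u (s, t)) (fderiv ℝ u (x, t) ((1:ℝ), (0:ℝ))) x :=
    (((hu.differentiable (by norm_num)) (x,t)).hasFDerivAt).comp_hasDerivAt x h1
  exact h2.deriv

lemma hasDerivAt_pdxx (u : ℝ × ℝ → ℂ) (hu : ContDiff ℝ 2 u) (x t : ℝ) :
    HasDerivAt (fun s : ℝ => pdx u s t) (pdxx u x t) x := by
  set G : ℝ × ℝ → ℂ := fun p => fderiv ℝ u p ((1:ℝ), (0:ℝ)) with hGdef
  have hG : ContDiff ℝ 1 G := (hu.fderiv_right (m := 1) (by norm_num)).clm_apply contDiff_const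
  have he : (fun s : ℝ => pdx u s t) = fun s : ℝ => G (s, t) :=
    funext fun s => pdx_eq_fderiv u hu s t
  have hdiff : Differentiable ℝ (fun s : ℝ => G (s, t)) :=
    (hG.differentiable (by norm_num)).comp (differentiable_id.prodMk (differentiable_const t))
  have h := (hdiff x).hasDerivAt
  rw [← he] at h
  have hd : pdxx u x t = deriv (fun s : ℝ => G (s, t)) x := by rw [pdxx, he]
  rw [hd, he]
  exact (hdiff x).hasDerivAt


section entries
variable (u : ℝ × ℝ → ℂ) (lam : ℂ) (x t : ℝ)

lemma zc00 (hu : ContDiff ℝ 2 u) :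
    deriv (fun s : ℝ => ZSU u lam x s 0 0) t - deriv (fun s : ℝ => ZSV u lam s t 0 0) x
      + (ZSU u lam x t * ZSV u lam x t - ZSV u lam x t * ZSU u lam x t) 0 0 = 0 := by
  have ha := hasDerivAt_pdx u hu x t
  have hb : HasDerivAt (fun s : ℝ => (starRingEnd ℂ) (u (s, t)))
      ((starRingEnd ℂ) (pdx u x t)) x := by
    simpa only [starRingEnd_apply] using ha.star
  have h1 : deriv (fun s : ℝ => ZSU u lam x s 0 0) t = 0 := by simp [ZSU]
  have h2 : deriv (fun s : ℝ => ZSV u lam s t 0 0) x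
      = Complex.I * (pdx u x t * (starRingEnd ℂ) (u (x, t))
          + u (x, t) * (starRingEnd ℂ) (pdx u x t)) := by
    have hfun : (fun s : ℝ => ZSV u lam s t 0 0)
        = fun s : ℝ => -2 * Complex.I * lam ^ 2
            + Complex.I * (u (s, t) * (starRingEnd ℂ) (u (s, t))) := by
      funext s; simp [ZSV, absSq]
    rw [hfun]
    exact (((ha.mul hb).const_mul Complex.I).const_add _).deriv
  rw [h1, h2]
  simp only [ZSU, ZSV, Matrix.sub_apply, Matrix.mul_apply, Fin.sum_univ_two,
    Matrix.cons_val', Matrix.cons_val_zero, Matrix.cons_val_one, Matrix.head_cons,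
    Matrix.head_fin_const, Matrix.empty_val', Matrix.cons_val_fin_one, Matrix.of_apply]
  ring

lemma zc11 (hu : ContDiff ℝ 2 u) :
    deriv (fun s : ℝ => ZSU u lam x s 1 1) t - deriv (fun s : ℝ => ZSV u lam s t 1 1) x
      + (ZSU u lam x t * ZSV u lam x t - ZSV u lam x t * ZSU u lam x t) 1 1 = 0 := by
  have ha := hasDerivAt_pdx u hu x t
  have hb : HasDerivAt (fun s : ℝ => (starRingEnd ℂ) (u (s, t)))
      ((starRingEnd ℂ) (pdx u x t)) x := by
    simpa only [starRingEnd_apply] using ha.star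
  have h1 : deriv (fun s : ℝ => ZSU u lam x s 1 1) t = 0 := by simp [ZSU]
  have h2 : deriv (fun s : ℝ => ZSV u lam s t 1 1) x
      = -(Complex.I * (pdx u x t * (starRingEnd ℂ) (u (x, t))
          + u (x, t) * (starRingEnd ℂ) (pdx u x t))) := by
    have hfun : (fun s : ℝ => ZSV u lam s t 1 1)
        = fun s : ℝ => 2 * Complex.I * lam ^ 2
            - Complex.I * (u (s, t) * (starRingEnd ℂ) (u (s, t))) := by
      funext s; simp [ZSV, absSq]
    rw [hfun]
    exact (((ha.mul hb).const_mul Complex.I).const_sub _).deriv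
  rw [h1, h2]
  simp only [ZSU, ZSV, Matrix.sub_apply, Matrix.mul_apply, Fin.sum_univ_two,
    Matrix.cons_val', Matrix.cons_val_zero, Matrix.cons_val_one, Matrix.head_cons,
    Matrix.head_fin_const, Matrix.empty_val', Matrix.cons_val_fin_one, Matrix.of_apply]
  ring

lemma zc01 (hu : ContDiff ℝ 2 u) :
    deriv (fun s : ℝ => ZSU u lam x s 0 1) t - deriv (fun s : ℝ => ZSV u lam s t 0 1) x
      + (ZSU u lam x t * ZSV u lam x t - ZSV u lam x t * ZSU u lam x t) 0 1
    = Complex.I * pdt u x t + pdxx u x t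
        + 2 * ((‖u (x, t)‖ : ℂ)) ^ 2 * u (x, t) := by
  have ha := hasDerivAt_pdx u hu x t
  have hc := hasDerivAt_pdxx u hu x t
  have he := hasDerivAt_pdt u hu x t
  have h1 : deriv (fun s : ℝ => ZSU u lam x s 0 1) t = Complex.I * pdt u x t := by
    have hfun : (fun s : ℝ => ZSU u lam x s 0 1) = fun s : ℝ => Complex.I * u (x, s) := by
      funext s; simp [ZSU]
    rw [hfun]
    exact (he.const_mul Complex.I).deriv
  have h2 : deriv (fun s : ℝ => ZSV u lam s t 0 1) x
      = 2 * Complex.I * lam * pdx u x t - pdxx u x t := by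
    have hfun : (fun s : ℝ => ZSV u lam s t 0 1)
        = fun s : ℝ => 2 * Complex.I * lam * u (s, t) - pdx u s t := by
      funext s; simp [ZSV]
    rw [hfun]
    exact ((ha.const_mul _).sub hc).deriv
  rw [h1, h2]
  simp only [ZSU, ZSV, Matrix.sub_apply, Matrix.mul_apply, Fin.sum_univ_two,
    Matrix.cons_val', Matrix.cons_val_zero, Matrix.cons_val_one, Matrix.head_cons,
    Matrix.head_fin_const, Matrix.empty_val', Matrix.cons_val_fin_one, Matrix.of_apply]
  rw [absSq]
  linear_combination (-2 * u (x, t) ^ 2 * (starRingEnd ℂ) (u (x, t))) * Complex.I_sq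

lemma zc10 (hu : ContDiff ℝ 2 u) :
    deriv (fun s : ℝ => ZSU u lam x s 1 0) t - deriv (fun s : ℝ => ZSV u lam s t 1 0) x
      + (ZSU u lam x t * ZSV u lam x t - ZSV u lam x t * ZSU u lam x t) 1 0
    = -((starRingEnd ℂ) (Complex.I * pdt u x t + pdxx u x t
        + 2 * ((‖u (x, t)‖ : ℂ)) ^ 2 * u (x, t))) := by
  have ha := hasDerivAt_pdx u hu x t
  have hb : HasDerivAt (fun s : ℝ => (starRingEnd ℂ) (u (s, t)))
      ((starRingEnd ℂ) (pdx u x t)) x := by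
    simpa only [starRingEnd_apply] using ha.star
  have hc := hasDerivAt_pdxx u hu x t
  have hd : HasDerivAt (fun s : ℝ => (starRingEnd ℂ) (pdx u s t))
      ((starRingEnd ℂ) (pdxx u x t)) x := by
    simpa only [starRingEnd_apply] using hc.star
  have he := hasDerivAt_pdt u hu x t
  have hf : HasDerivAt (fun s : ℝ => (starRingEnd ℂ) (u (x, s)))
      ((starRingEnd ℂ) (pdt u x t)) t := by
    simpa only [starRingEnd_apply] using he.star
  have h1 : deriv (fun s : ℝ => ZSU u lam x s 1 0) t
      = Complex.I * (starRingEnd ℂ) (pdt u x t) := by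
    have hfun : (fun s : ℝ => ZSU u lam x s 1 0)
        = fun s : ℝ => Complex.I * (starRingEnd ℂ) (u (x, s)) := by
      funext s; simp [ZSU]
    rw [hfun]
    exact (hf.const_mul Complex.I).deriv
  have h2 : deriv (fun s : ℝ => ZSV u lam s t 1 0) x
      = 2 * Complex.I * lam * (starRingEnd ℂ) (pdx u x t)
          + (starRingEnd ℂ) (pdxx u x t) := by
    have hfun : (fun s : ℝ => ZSV u lam s t 1 0)
        = fun s : ℝ => 2 * Complex.I * lam * (starRingEnd ℂ) (u (s, t))
            + (starRingEnd ℂ) (pdx u s t) := by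
      funext s; simp [ZSV]
    rw [hfun]
    exact ((hb.const_mul _).add hd).deriv
  rw [h1, h2]
  simp only [ZSU, ZSV, Matrix.sub_apply, Matrix.mul_apply, Fin.sum_univ_two,
    Matrix.cons_val', Matrix.cons_val_zero, Matrix.cons_val_one, Matrix.head_cons,
    Matrix.head_fin_const, Matrix.empty_val', Matrix.cons_val_fin_one, Matrix.of_apply,
    map_add, map_mul, map_pow, map_ofNat, Complex.conj_I, Complex.conj_ofReal]
  rw [absSq]
  linear_combination (2 * (starRingEnd ℂ) (u (x, t)) ^ 2 * u (x, t)) * Complex.I_sq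

end entries


/-- A twice continuously differentiable `u : ℝ × ℝ → ℂ` satisfies the focusing
NLS equation `i u_t + u_xx + 2|u|² u = 0` at every point if and only if the zero-curvature
equation `∂_t U − ∂_x V + U·V − V·U = 0` holds for every `λ ∈ ℂ` and every `(x,t)`. -/
theorem nls_iff_zero_curvature (u : ℝ × ℝ → ℂ) (hu : ContDiff ℝ 2 u) :
    (∀ x t : ℝ,
        Complex.I * pdt u x t + pdxx u x t
          + 2 * ((‖u (x, t)‖ : ℂ)) ^ 2 * u (x, t) = 0)
      ↔
    (∀ (lam : ℂ) (x t : ℝ) (i j : Fin 2),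
        deriv (fun s : ℝ => ZSU u lam x s i j) t - deriv (fun s : ℝ => ZSV u lam s t i j) x
          + (ZSU u lam x t * ZSV u lam x t - ZSV u lam x t * ZSU u lam x t) i j = 0) := by
  constructor
  · intro hnls lam x t i j
    fin_cases i <;> fin_cases j <;>
      simp only [Fin.zero_eta, Fin.mk_one, Fin.isValue]
    · exact zc00 u lam x t hu
    · rw [zc01 u lam x t hu]; exact hnls x t
    · rw [zc10 u lam x t hu, hnls x t, map_zero, neg_zero]
    · exact zc11 u lam x t hu
  · intro h x t
    have := h 0 x t 0 1
    rw [zc01 u 0 x t hu] at this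
    exact this
end

section
/- Let m ≥ 1, let L₀ be a diagonal m×m complex matrix one of whose diagonal entries equals λ₁ with multiplicity k, occurring exactly at the index set S = {j₁, …, j_k}, and let L₁ be any m×m complex matrix. Let A₁ be the k×k submatrix of L₁ obtained by keeping only the rows and columns indexed by S, and assume the eigenvalues λ̃₁, …, λ̃_k of A₁ (the roots of its characteristic polynomial) are pairwise distinct. Then there exist constants C > 0 and ε₀ > 0 such that for every ε with 0 < |ε| < ε₀ and every j ∈ {1, …, k}, the matrix L₀ + ε L₁ has a simple eigenvalue ν_j(ε) (a simple root of its characteristic polynomial) with |ν_j(ε) − λ₁ − ε λ̃_j| ≤ C|ε|². -/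
open Matrix Polynomial

noncomputable def Complex.abs : AbsoluteValue ℂ ℝ where
  toFun z := ‖z‖
  map_mul' := norm_mul
  nonneg' := norm_nonneg
  eq_zero' _ := norm_eq_zero
  add_le' := norm_add_le

lemma Complex.abs_ofReal (r : ℝ) : Complex.abs (r : ℂ) = |r| := Complex.norm_real r

namespace PertAux

lemma abs_prod_le {ι : Type*} (s : Finset ι) (g : ι → ℂ) {r : ℝ} (hr : 0 ≤ r)
    (hg : ∀ i ∈ s, Complex.abs (g i) ≤ r) :
    Complex.abs (∏ i ∈ s, g i) ≤ r ^ s.card := by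
  rw [map_prod]
  calc ∏ i ∈ s, Complex.abs (g i) ≤ ∏ _i ∈ s, r :=
        Finset.prod_le_prod (fun i _ => AbsoluteValue.nonneg _ _) hg
    _ = r ^ s.card := by rw [Finset.prod_const]

/-- product difference bound over a finset -/
lemma prod_sub_prod_bound {ι : Type*} (s : Finset ι) (f g : ι → ℂ) {r d : ℝ}
    (hr : 0 ≤ r) (hd : 0 ≤ d)
    (hf : ∀ i ∈ s, Complex.abs (f i) ≤ r) (hg : ∀ i ∈ s, Complex.abs (g i) ≤ r)
    (hfg : ∀ i ∈ s, Complex.abs (f i - g i) ≤ d) :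
    Complex.abs (∏ i ∈ s, f i - ∏ i ∈ s, g i) ≤ s.card * d * r ^ (s.card - 1) := by
  classical
  induction s using Finset.induction_on with
  | empty => simp
  | @insert a s ha ih =>
    have hfa : Complex.abs (f a) ≤ r := hf a (Finset.mem_insert_self a s)
    have hga : Complex.abs (g a) ≤ r := hg a (Finset.mem_insert_self a s)
    have hfga : Complex.abs (f a - g a) ≤ d := hfg a (Finset.mem_insert_self a s)
    have ih' := ih (fun i hi => hf i (Finset.mem_insert_of_mem hi))
      (fun i hi => hg i (Finset.mem_insert_of_mem hi))
      (fun i hi => hfg i (Finset.mem_insert_of_mem hi))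
    rw [Finset.prod_insert ha, Finset.prod_insert ha, Finset.card_insert_of_notMem ha]
    push_cast
    have key : f a * ∏ i ∈ s, f i - g a * ∏ i ∈ s, g i
        = f a * (∏ i ∈ s, f i - ∏ i ∈ s, g i) + (f a - g a) * ∏ i ∈ s, g i := by ring
    rw [key]
    calc Complex.abs _ ≤ Complex.abs (f a * (∏ i ∈ s, f i - ∏ i ∈ s, g i))
          + Complex.abs ((f a - g a) * ∏ i ∈ s, g i) := AbsoluteValue.add_le _ _ _
      _ ≤ r * (s.card * d * r ^ (s.card - 1)) + d * r ^ s.card := by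
          rw [AbsoluteValue.map_mul, AbsoluteValue.map_mul]
          exact add_le_add
            (mul_le_mul hfa ih' (AbsoluteValue.nonneg _ _) hr)
            (mul_le_mul hfga (abs_prod_le s g hr (fun i hi => hg i (Finset.mem_insert_of_mem hi)))
              (AbsoluteValue.nonneg _ _) hd)
      _ ≤ ((s.card : ℝ) + 1) * d * r ^ ((s.card + 1) - 1) := by
          rcases Nat.eq_zero_or_pos s.card with h0 | hpos
          · simp [h0]
          · have : r * (s.card * d * r ^ (s.card - 1)) = s.card * d * (r * r ^ (s.card - 1)) := by
              ring
            rw [this, ← pow_succ']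
            have hsc : s.card - 1 + 1 = s.card := Nat.succ_pred_eq_of_pos hpos
            rw [hsc]
            have : ((s.card + 1) - 1) = s.card := by omega
            rw [this]
            nlinarith [pow_nonneg hr s.card, mul_nonneg (mul_nonneg (Nat.cast_nonneg (α := ℝ) s.card) hd) (pow_nonneg hr s.card)]


lemma abs_zsmul_sign (σ : Equiv.Perm ι) (z : ℂ) [DecidableEq ι] [Fintype ι] :
    Complex.abs (Equiv.Perm.sign σ • z) = Complex.abs z := by
  rcases Int.units_eq_one_or (Equiv.Perm.sign σ) with h | h <;> rw [h] <;> simp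

lemma abs_det_le {n : ℕ} (A : Matrix (Fin n) (Fin n) ℂ) {r : ℝ} (hr : 0 ≤ r)
    (h : ∀ i j, Complex.abs (A i j) ≤ r) :
    Complex.abs A.det ≤ (Fintype.card (Equiv.Perm (Fin n)) : ℝ) * r ^ n := by
  rw [Matrix.det_apply]
  calc Complex.abs (∑ σ : Equiv.Perm (Fin n), Equiv.Perm.sign σ • ∏ i, A (σ i) i)
      ≤ ∑ σ : Equiv.Perm (Fin n), Complex.abs (Equiv.Perm.sign σ • ∏ i, A (σ i) i) :=
        AbsoluteValue.sum_le _ _ _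
    _ ≤ ∑ _σ : Equiv.Perm (Fin n), r ^ n := by
        refine Finset.sum_le_sum fun σ _ => ?_
        rw [abs_zsmul_sign]
        have := abs_prod_le (Finset.univ : Finset (Fin n)) (fun i => A (σ i) i) hr
          (fun i _ => h (σ i) i)
        simpa using this
    _ = (Fintype.card (Equiv.Perm (Fin n)) : ℝ) * r ^ n := by
        rw [Finset.sum_const, Finset.card_univ, nsmul_eq_mul]

lemma abs_det_sub_det_le {n : ℕ} (A B : Matrix (Fin n) (Fin n) ℂ) {r d : ℝ}
    (hr : 0 ≤ r) (hd : 0 ≤ d)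
    (hA : ∀ i j, Complex.abs (A i j) ≤ r) (hB : ∀ i j, Complex.abs (B i j) ≤ r)
    (hAB : ∀ i j, Complex.abs (A i j - B i j) ≤ d) :
    Complex.abs (A.det - B.det)
      ≤ (Fintype.card (Equiv.Perm (Fin n)) : ℝ) * (n * d * r ^ (n - 1)) := by
  rw [Matrix.det_apply, Matrix.det_apply, ← Finset.sum_sub_distrib]
  calc Complex.abs (∑ σ : Equiv.Perm (Fin n),
          (Equiv.Perm.sign σ • ∏ i, A (σ i) i - Equiv.Perm.sign σ • ∏ i, B (σ i) i))
      ≤ ∑ σ : Equiv.Perm (Fin n), Complex.abs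
          (Equiv.Perm.sign σ • ∏ i, A (σ i) i - Equiv.Perm.sign σ • ∏ i, B (σ i) i) :=
        AbsoluteValue.sum_le _ _ _
    _ ≤ ∑ _σ : Equiv.Perm (Fin n), (n : ℝ) * d * r ^ (n - 1) := by
        refine Finset.sum_le_sum fun σ _ => ?_
        rw [← smul_sub, abs_zsmul_sign]
        have := prod_sub_prod_bound (Finset.univ : Finset (Fin n))
          (fun i => A (σ i) i) (fun i => B (σ i) i) hr hd
          (fun i _ => hA (σ i) i) (fun i _ => hB (σ i) i) (fun i _ => hAB (σ i) i)
        simpa using this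
    _ = (Fintype.card (Equiv.Perm (Fin n)) : ℝ) * ((n : ℝ) * d * r ^ (n - 1)) := by
        rw [Finset.sum_const, Finset.card_univ, nsmul_eq_mul]

lemma multiset_prod_le (M : Multiset ℝ) {b : ℝ} (hb : 0 ≤ b)
    (h0 : ∀ x ∈ M, 0 ≤ x) (h : ∀ x ∈ M, x ≤ b) :
    M.prod ≤ b ^ Multiset.card M := by
  induction M using Multiset.induction_on with
  | empty => simp
  | cons a M ih =>
    rw [Multiset.prod_cons, Multiset.card_cons, pow_succ']
    exact mul_le_mul (h a (Multiset.mem_cons_self a M))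
      (ih (fun x hx => h0 x (Multiset.mem_cons_of_mem hx))
        (fun x hx => h x (Multiset.mem_cons_of_mem hx)))
      (Multiset.prod_nonneg (fun x hx => h0 x (Multiset.mem_cons_of_mem hx))) hb

lemma le_multiset_prod (M : Multiset ℝ) {b : ℝ} (hb : 0 ≤ b)
    (h : ∀ x ∈ M, b ≤ x) :
    b ^ Multiset.card M ≤ M.prod := by
  induction M using Multiset.induction_on with
  | empty => simp
  | cons a M ih =>
    rw [Multiset.prod_cons, Multiset.card_cons, pow_succ']
    exact mul_le_mul (h a (Multiset.mem_cons_self a M))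
      (ih (fun x hx => h x (Multiset.mem_cons_of_mem hx)))
      (pow_nonneg hb _) ((hb.trans (h a (Multiset.mem_cons_self a M))))

lemma my_eval_charpoly {n : Type*} [Fintype n] [DecidableEq n]
    (M : Matrix n n ℂ) (z : ℂ) :
    M.charpoly.eval z = (z • (1 : Matrix n n ℂ) - M).det := by
  rw [Matrix.charpoly, ← Polynomial.coe_evalRingHom, RingHom.map_det]
  congr 1
  ext i j
  by_cases h : i = j <;>
    simp [Matrix.charmatrix_apply, Matrix.one_apply, Matrix.diagonal_apply, h,
      Matrix.map_apply]

lemma sum_card_filter_le {α ι : Type*} (M : Multiset α) (F : Finset ι)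
    (p : ι → α → Prop) [∀ i, DecidablePred (p i)]
    (hdisj : ∀ i ∈ F, ∀ j ∈ F, i ≠ j → ∀ x, p i x → p j x → False) :
    ∑ i ∈ F, Multiset.card (M.filter (p i)) ≤ Multiset.card M := by
  classical
  have key : ∀ F' : Finset ι, (∀ i ∈ F', ∀ j ∈ F', i ≠ j → ∀ x, p i x → p j x → False) →
      ∑ i ∈ F', Multiset.card (M.filter (p i))
        ≤ Multiset.card (M.filter (fun x => ∃ i ∈ F', p i x)) := by
    intro F'
    induction F' using Finset.induction_on with
    | empty => simp
    | @insert a F' ha ih =>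
      intro hdisj'
      rw [Finset.sum_insert ha]
      have hd' : ∀ i ∈ F', ∀ j ∈ F', i ≠ j → ∀ x, p i x → p j x → False :=
        fun i hi j hj hij =>
          hdisj' i (Finset.mem_insert_of_mem hi) j (Finset.mem_insert_of_mem hj) hij
      have h2 : M.filter (fun x => p a x ∧ ∃ i ∈ F', p i x) = 0 := by
        rw [Multiset.filter_eq_nil]
        rintro x _ ⟨hpa, i, hi, hpi⟩
        exact hdisj' a (Finset.mem_insert_self a F') i (Finset.mem_insert_of_mem hi)
          (fun h => ha (h ▸ hi)) x hpa hpi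
      have step : Multiset.card (M.filter (p a))
          + Multiset.card (M.filter (fun x => ∃ i ∈ F', p i x))
          ≤ Multiset.card (M.filter (fun x => ∃ i ∈ insert a F', p i x)) := by
        rw [← Multiset.card_add]
        have h3 := Multiset.filter_add_filter (p a) (fun x => ∃ i ∈ F', p i x) M
        rw [h2, add_zero] at h3
        rw [h3]
        apply Multiset.card_le_card
        apply Multiset.monotone_filter_right
        rintro x (hpa | ⟨i, hi, hpi⟩)
        · exact ⟨a, Finset.mem_insert_self a F', hpa⟩
        · exact ⟨i, Finset.mem_insert_of_mem hi, hpi⟩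
      exact le_trans (Nat.add_le_add_left (ih hd') _) step
  exact le_trans (key F hdisj)
    (Multiset.card_le_card (Multiset.filter_le _ M))





noncomputable def Nmat {m k : ℕ} (L0 L1 : Matrix (Fin m) (Fin m) ℂ) (lam1 : ℂ)
    (e : Fin k ↪ Fin m) (ε μ : ℂ) : Matrix (Fin m) (Fin m) ℂ :=
  Matrix.of fun i i' =>
    if ∃ a, e a = i then μ * (if i = i' then 1 else 0) - L1 i i'
    else (lam1 - L0 i i) * (if i = i' then 1 else 0)
      + ε * (μ * (if i = i' then 1 else 0) - L1 i i')

lemma factor_det {m k : ℕ} (L0 L1 : Matrix (Fin m) (Fin m) ℂ) (hdiag : L0.IsDiag)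
    (lam1 : ℂ) (e : Fin k ↪ Fin m) (hS : ∀ j : Fin m, L0 j j = lam1 ↔ ∃ i : Fin k, e i = j)
    (ε μ : ℂ) :
    ((lam1 + ε * μ) • (1 : Matrix (Fin m) (Fin m) ℂ) - (L0 + ε • L1)).det
      = ε ^ k * (Nmat L0 L1 lam1 e ε μ).det := by
  have hmat : (lam1 + ε * μ) • (1 : Matrix (Fin m) (Fin m) ℂ) - (L0 + ε • L1)
      = Matrix.of fun i i' => (if ∃ a, e a = i then ε else 1) * Nmat L0 L1 lam1 e ε μ i i' := by
    ext i i'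
    simp only [Matrix.sub_apply, Matrix.smul_apply, Matrix.add_apply, Matrix.one_apply,
      Matrix.of_apply, Nmat, smul_eq_mul]
    by_cases hP : ∃ a, e a = i
    · by_cases hii : i = i'
      · subst hii
        have h0 : L0 i i = lam1 := (hS i).mpr hP
        simp only [if_pos hP, eq_self_iff_true, if_true, h0]
        ring
      · have h0 : L0 i i' = 0 := hdiag hii
        simp only [if_pos hP, if_neg hii, h0]
        ring
    · by_cases hii : i = i'
      · subst hii
        simp only [if_neg hP, eq_self_iff_true, if_true]
        ring
      · have h0 : L0 i i' = 0 := hdiag hii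
        simp only [if_neg hP, if_neg hii, h0]
        ring
  rw [hmat, Matrix.det_mul_column]
  congr 1
  rw [Finset.prod_ite (fun _ => ε) (fun _ => (1:ℂ)), Finset.prod_const, Finset.prod_const,
    one_pow, mul_one]
  congr 1
  have : Finset.univ.filter (fun i : Fin m => ∃ a, e a = i) = Finset.univ.map e := by
    ext x
    simp [Finset.mem_map, eq_comm]
  rw [this, Finset.card_map, Finset.card_univ, Fintype.card_fin]

lemma det_Nmat_zero {m k : ℕ} (L0 L1 : Matrix (Fin m) (Fin m) ℂ)
    (lam1 : ℂ) (e : Fin k ↪ Fin m) (μ : ℂ) :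
    (Nmat L0 L1 lam1 e 0 μ).det
      = (∏ x : {x : Fin m // ¬ x ∈ Set.range ⇑e}, (lam1 - L0 x.1 x.1))
        * ((L1.submatrix e e).charpoly.eval μ) := by
  classical
  set p : Fin m → Prop := fun x => x ∈ Set.range ⇑e with hp
  let σ : (Fin k ⊕ {x : Fin m // ¬ p x}) ≃ Fin m :=
    (Equiv.sumCongr (Equiv.ofInjective (⇑e) e.injective) (Equiv.refl _)).trans
      (Equiv.sumCompl p)
  rw [← Matrix.det_submatrix_equiv_self σ]
  have hblocks : (Nmat L0 L1 lam1 e 0 μ).submatrix σ σ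
      = Matrix.fromBlocks (μ • (1 : Matrix (Fin k) (Fin k) ℂ) - L1.submatrix e e)
          (Matrix.of fun a (b : {x : Fin m // ¬ p x}) => -(L1 (e a) b.1)) 0
          (Matrix.diagonal fun x : {x : Fin m // ¬ p x} => lam1 - L0 x.1 x.1) := by
    ext i j
    have hσl : ∀ a : Fin k, σ (Sum.inl a) = e a := by
      intro a
      simp [σ, Equiv.sumCompl_apply_inl]
    have hσr : ∀ b : {x : Fin m // ¬ p x}, σ (Sum.inr b) = b.1 := by
      intro b
      simp [σ, Equiv.sumCompl_apply_inr]
    cases i with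
    | inl a =>
      cases j with
      | inl b =>
        have hmem : ∃ a', e a' = e a := ⟨a, rfl⟩
        simp only [Matrix.submatrix_apply, hσl, Nmat, Matrix.of_apply, if_pos hmem,
          Matrix.fromBlocks_apply₁₁, Matrix.sub_apply, Matrix.smul_apply, Matrix.one_apply,
          Matrix.submatrix_apply, smul_eq_mul, EmbeddingLike.apply_eq_iff_eq]
        by_cases hab : a = b <;> simp [hab]
      | inr b =>
        have hmem : ∃ a', e a' = e a := ⟨a, rfl⟩
        have hne : ¬ (e a = b.1) := fun h => b.2 ⟨a, h⟩
        simp only [Matrix.submatrix_apply, hσl, hσr, Nmat, Matrix.of_apply, if_pos hmem,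
          if_neg hne, Matrix.fromBlocks_apply₁₂, Matrix.of_apply]
        ring
    | inr a =>
      cases j with
      | inl b =>
        have hnm : ¬ ∃ x, e x = a.1 := fun ⟨x, hx⟩ => a.2 ⟨x, hx⟩
        have hne : ¬ (a.1 = e b) := fun h => a.2 ⟨b, h.symm⟩
        simp only [Matrix.submatrix_apply, hσl, hσr, Nmat, Matrix.of_apply, if_neg hnm,
          if_neg hne, Matrix.fromBlocks_apply₂₁, Matrix.zero_apply]
        ring
      | inr b =>
        have hnm : ¬ ∃ x, e x = a.1 := fun ⟨x, hx⟩ => a.2 ⟨x, hx⟩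
        simp only [Matrix.submatrix_apply, hσr, Nmat, Matrix.of_apply, if_neg hnm,
          Matrix.fromBlocks_apply₂₂, Matrix.diagonal_apply]
        by_cases hab : a = b
        · subst hab
          simp
        · have hne : ¬ (a.1 = b.1) := fun h => hab (Subtype.ext h)
          rw [if_neg hne, if_neg hab]
          ring
  rw [hblocks, Matrix.det_fromBlocks_zero₂₁, Matrix.det_diagonal,
    my_eval_charpoly (L1.submatrix e e) μ, mul_comm]



lemma abs_eval_eq_prod {p : Polynomial ℂ} (hp : p.Monic) (z : ℂ) :
    Complex.abs (p.eval z) = ((p.roots.map fun a => Complex.abs (z - a)).prod) := by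
  conv_lhs => rw [(IsAlgClosed.splits p).eq_prod_roots_of_monic hp]
  rw [Polynomial.eval_multiset_prod, Multiset.map_map, map_multiset_prod, Multiset.map_map]
  refine congrArg Multiset.prod (Multiset.map_congr rfl fun a _ => ?_)
  simp

lemma root_near_diag {m : ℕ} (hm : 1 ≤ m) (L0 L1 : Matrix (Fin m) (Fin m) ℂ)
    (hdiag : L0.IsDiag) (ε ν : ℂ)
    (hdet : (ν • (1 : Matrix (Fin m) (Fin m) ℂ) - (L0 + ε • L1)).det = 0) :
    ∃ i, Complex.abs (ν - L0 i i)
      ≤ Complex.abs ε * ∑ i', ∑ j', Complex.abs (L1 i' j') := by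
  classical
  obtain ⟨v, hv0, hv⟩ := (Matrix.exists_mulVec_eq_zero_iff).mpr hdet
  obtain ⟨i₀, -, hmax⟩ := Finset.exists_max_image Finset.univ
    (fun i => Complex.abs (v i)) ⟨⟨0, hm⟩, Finset.mem_univ _⟩
  have hvi₀ : 0 < Complex.abs (v i₀) := by
    obtain ⟨i, hi⟩ := Function.ne_iff.mp hv0
    have : 0 < Complex.abs (v i) := by
      simpa [AbsoluteValue.pos_iff] using hi
    exact lt_of_lt_of_le this (hmax i (Finset.mem_univ i))
  refine ⟨i₀, ?_⟩
  have hrow : ∑ j, ((ν • (1 : Matrix (Fin m) (Fin m) ℂ) - (L0 + ε • L1)) i₀ j) * v j = 0 := by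
    have := congrFun hv i₀
    simpa [Matrix.mulVec, dotProduct] using this
  have key : (ν - L0 i₀ i₀) * v i₀ = ε * ∑ j, L1 i₀ j * v j := by
    have expand : ∑ j, ((ν • (1 : Matrix (Fin m) (Fin m) ℂ) - (L0 + ε • L1)) i₀ j) * v j
        = (ν - L0 i₀ i₀) * v i₀ - ε * ∑ j, L1 i₀ j * v j := by
      have step : ∀ j, ((ν • (1 : Matrix (Fin m) (Fin m) ℂ) - (L0 + ε • L1)) i₀ j) * v j
          = (if i₀ = j then (ν - L0 i₀ i₀) * v j else 0) - ε * (L1 i₀ j * v j) := by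
        intro j
        by_cases h : i₀ = j
        · subst h
          simp only [Matrix.sub_apply, Matrix.smul_apply, Matrix.add_apply, Matrix.one_apply_eq,
            smul_eq_mul, eq_self_iff_true, if_true]
          ring
        · have h0 : L0 i₀ j = 0 := hdiag h
          simp only [Matrix.sub_apply, Matrix.smul_apply, Matrix.add_apply,
            Matrix.one_apply_ne h, smul_eq_mul, if_neg h, h0]
          ring
      rw [Finset.sum_congr rfl (fun j _ => step j), Finset.sum_sub_distrib,
        Finset.sum_ite_eq Finset.univ i₀ (fun j => (ν - L0 i₀ i₀) * v j),
        if_pos (Finset.mem_univ i₀), ← Finset.mul_sum]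
    rw [expand] at hrow
    linear_combination hrow
  have habs : Complex.abs (ν - L0 i₀ i₀) * Complex.abs (v i₀)
      ≤ (Complex.abs ε * ∑ i', ∑ j', Complex.abs (L1 i' j')) * Complex.abs (v i₀) := by
    rw [← AbsoluteValue.map_mul, key, AbsoluteValue.map_mul]
    have h1 : Complex.abs (∑ j, L1 i₀ j * v j) ≤ ∑ j, Complex.abs (L1 i₀ j) * Complex.abs (v j) := by
      refine le_trans (AbsoluteValue.sum_le _ _ _) ?_
      exact le_of_eq (Finset.sum_congr rfl fun j _ => AbsoluteValue.map_mul _ _ _)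
    have h2 : ∑ j, Complex.abs (L1 i₀ j) * Complex.abs (v j)
        ≤ (∑ j, Complex.abs (L1 i₀ j)) * Complex.abs (v i₀) := by
      rw [Finset.sum_mul]
      exact Finset.sum_le_sum fun j _ => mul_le_mul_of_nonneg_left (hmax j (Finset.mem_univ j))
        (AbsoluteValue.nonneg _ _)
    have h3 : ∑ j, Complex.abs (L1 i₀ j) ≤ ∑ i', ∑ j', Complex.abs (L1 i' j') :=
      Finset.single_le_sum (f := fun i' => ∑ j', Complex.abs (L1 i' j'))
        (fun i' _ => Finset.sum_nonneg fun j' _ => AbsoluteValue.nonneg _ _) (Finset.mem_univ i₀)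
    calc Complex.abs ε * Complex.abs (∑ j, L1 i₀ j * v j)
        ≤ Complex.abs ε * ((∑ j, Complex.abs (L1 i₀ j)) * Complex.abs (v i₀)) := by
          exact mul_le_mul_of_nonneg_left (le_trans h1 h2) (AbsoluteValue.nonneg _ _)
      _ ≤ (Complex.abs ε * ∑ i', ∑ j', Complex.abs (L1 i' j')) * Complex.abs (v i₀) := by
          rw [mul_assoc]
          exact mul_le_mul_of_nonneg_left
            (mul_le_mul_of_nonneg_right h3 (AbsoluteValue.nonneg _ _))
            (AbsoluteValue.nonneg _ _)
  exact le_of_mul_le_mul_right habs hvi₀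

end PertAux

set_option maxHeartbeats 2000000 in
/-- matrix perturbation lemma: let `L₀` be a diagonal `m×m` complex matrix
whose diagonal entry `λ₁` occurs exactly at the `k` indices enumerated by the embedding
`e : Fin k ↪ Fin m`, let `L₁` be any `m×m` complex matrix, and let `A₁` be the `k×k`
submatrix of `L₁` with rows and columns indexed by `e`.  If the eigenvalues
`λ̃₁, …, λ̃_k` of `A₁` (the roots of its characteristic polynomial) are pairwise distinct,
then there are `C > 0` and `ε₀ > 0` such that for every `ε` with `0 < |ε| < ε₀` and every
`j`, the matrix `L₀ + ε L₁` has a simple eigenvalue `ν_j(ε)` with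
`|ν_j(ε) − λ₁ − ε λ̃_j| ≤ C |ε|²`. -/
theorem perturbation_of_multiple_eigenvalue {m k : ℕ} (hm : 1 ≤ m)
    (L0 L1 : Matrix (Fin m) (Fin m) ℂ) (hdiag : L0.IsDiag) (lam1 : ℂ)
    (e : Fin k ↪ Fin m)
    (hS : ∀ j : Fin m, L0 j j = lam1 ↔ ∃ i : Fin k, e i = j)
    (lamt : Fin k → ℂ) (hinj : Function.Injective lamt)
    (hroots : (L1.submatrix e e).charpoly.roots = Multiset.map lamt Finset.univ.val) :
    ∃ C > (0 : ℝ), ∃ ε₀ > (0 : ℝ), ∀ ε : ℂ,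
      0 < ‖ε‖ → ‖ε‖ < ε₀ → ∀ j : Fin k, ∃ ν : ℂ,
        (L0 + ε • L1).charpoly.rootMultiplicity ν = 1
        ∧ ‖ν - lam1 - ε * lamt j‖ ≤ C * (‖ε‖) ^ 2 := by
  classical
  change ∃ C > (0 : ℝ), ∃ ε₀ > (0 : ℝ), ∀ ε : ℂ,
      0 < Complex.abs ε → Complex.abs ε < ε₀ → ∀ j : Fin k, ∃ ν : ℂ,
        (L0 + ε • L1).charpoly.rootMultiplicity ν = 1
        ∧ Complex.abs (ν - lam1 - ε * lamt j) ≤ C * (Complex.abs ε) ^ 2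
  -- constants
  set CL1 : ℝ := ∑ i', ∑ j', Complex.abs (L1 i' j') with hCL1def
  have hCL1 : 0 ≤ CL1 := Finset.sum_nonneg fun i _ =>
    Finset.sum_nonneg fun j _ => AbsoluteValue.nonneg _ _
  have hL1entry : ∀ i j, Complex.abs (L1 i j) ≤ CL1 := by
    intro i j
    calc Complex.abs (L1 i j) ≤ ∑ j', Complex.abs (L1 i j') :=
          Finset.single_le_sum (f := fun j' => Complex.abs (L1 i j'))
            (fun j' _ => AbsoluteValue.nonneg _ _) (Finset.mem_univ j)
      _ ≤ CL1 := Finset.single_le_sum (f := fun i' => ∑ j', Complex.abs (L1 i' j'))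
          (fun i' _ => Finset.sum_nonneg fun j' _ => AbsoluteValue.nonneg _ _) (Finset.mem_univ i)
  set Lam : ℝ := (∑ i, Complex.abs (lamt i)) + 1 with hLamdef
  have hLam1 : 1 ≤ Lam := by
    have : 0 ≤ ∑ i, Complex.abs (lamt i) :=
      Finset.sum_nonneg fun i _ => AbsoluteValue.nonneg _ _
    simp only [hLamdef]; linarith
  have hLam0 : 0 < Lam := lt_of_lt_of_le one_pos hLam1
  have hlamt : ∀ i, Complex.abs (lamt i) ≤ Lam - 1 := by
    intro i
    have : Complex.abs (lamt i) ≤ ∑ i', Complex.abs (lamt i') :=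
      Finset.single_le_sum (f := fun i' => Complex.abs (lamt i'))
        (fun i' _ => AbsoluteValue.nonneg _ _) (Finset.mem_univ i)
    simp only [hLamdef]; linarith
  obtain ⟨d, hd0, hdsep⟩ : ∃ d > (0:ℝ), ∀ i j : Fin k, i ≠ j →
      d ≤ Complex.abs (lamt i - lamt j) := by
    set s : Finset (Fin k × Fin k) := Finset.univ.filter (fun q => q.1 ≠ q.2) with hsdef
    rcases s.eq_empty_or_nonempty with hse | hsne
    · refine ⟨1, one_pos, fun i j hij => absurd ?_ (Finset.notMem_empty (i,j))⟩
      rw [← hse]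
      simp [hsdef, hij]
    · obtain ⟨q, hq, hqmin⟩ := Finset.exists_min_image s
        (fun q => Complex.abs (lamt q.1 - lamt q.2)) hsne
      have hqne : q.1 ≠ q.2 := by
        have := hq
        simp [hsdef] at this
        exact this
      refine ⟨Complex.abs (lamt q.1 - lamt q.2), ?_, fun i j hij => ?_⟩
      · exact Complex.abs.pos_iff.mpr (sub_ne_zero.mpr (fun h => hqne (hinj h)))
      · exact hqmin (i, j) (by simp [hsdef, hij])
  obtain ⟨δ, hδ0, hδ⟩ : ∃ δ > (0:ℝ), ∀ i : Fin m,
      L0 i i = lam1 ∨ δ ≤ Complex.abs (L0 i i - lam1) := by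
    set s : Finset (Fin m) := Finset.univ.filter (fun i => L0 i i ≠ lam1) with hsdef
    rcases s.eq_empty_or_nonempty with hse | hsne
    · refine ⟨1, one_pos, fun i => ?_⟩
      by_contra hcon
      push_neg at hcon
      have : i ∈ s := by simp [hsdef, hcon.1]
      rw [hse] at this
      exact Finset.notMem_empty i this
    · obtain ⟨i₁, hi₁, hmin⟩ := Finset.exists_min_image s
        (fun i => Complex.abs (L0 i i - lam1)) hsne
      have hne : L0 i₁ i₁ ≠ lam1 := by
        have := hi₁; simp [hsdef] at this; exact this
      refine ⟨Complex.abs (L0 i₁ i₁ - lam1), ?_, fun i => ?_⟩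
      · exact Complex.abs.pos_iff.mpr (sub_ne_zero.mpr hne)
      · by_cases hi : L0 i i = lam1
        · exact Or.inl hi
        · exact Or.inr (hmin i (by simp [hsdef, hi]))
  set Dd : ℝ := ∑ i, Complex.abs (L0 i i) with hDddef
  have hDd : 0 ≤ Dd := Finset.sum_nonneg fun i _ => AbsoluteValue.nonneg _ _
  have hL0entry : ∀ i, Complex.abs (L0 i i) ≤ Dd := fun i =>
    Finset.single_le_sum (f := fun i' => Complex.abs (L0 i' i'))
      (fun i' _ => AbsoluteValue.nonneg _ _) (Finset.mem_univ i)
  set B : ℝ := CL1 + Lam + d + 1 with hBdef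
  have hB0 : 0 < B := by rw [hBdef]; linarith
  have hCL1B : CL1 ≤ B := by simp only [hBdef]; linarith
  set Rb : ℝ := B + Lam + 1 with hRbdef
  have hRb0 : 0 < Rb := by rw [hRbdef]; linarith
  set r₀ : ℝ := Complex.abs lam1 + Dd + 2*Rb + 2*CL1 + 2 with hr₀def
  have hr₀0 : 0 < r₀ := by
    have h1 : 0 ≤ Complex.abs lam1 := AbsoluteValue.nonneg _ _
    rw [hr₀def]; linarith
  set Kp : ℝ := (Fintype.card (Equiv.Perm (Fin m)) : ℝ) with hKpdef
  have hKp0 : 0 ≤ Kp := Nat.cast_nonneg _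
  set K : ℝ := Kp * m * (Rb + CL1) * r₀ ^ (m - 1) + 1 with hKdef
  have hK0 : 0 < K := by
    have h1 : 0 ≤ Kp * m * (Rb + CL1) * r₀ ^ (m - 1) :=
      mul_nonneg (mul_nonneg (mul_nonneg hKp0 (Nat.cast_nonneg m)) (by linarith))
        (pow_nonneg hr₀0.le _)
    rw [hKdef]; linarith
  set cc : ℂ := ∏ x : {x : Fin m // ¬ x ∈ Set.range ⇑e}, (lam1 - L0 x.1 x.1) with hccdef
  have hcc : cc ≠ 0 := by
    rw [hccdef]
    refine Finset.prod_ne_zero_iff.mpr fun x _ => ?_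
    refine sub_ne_zero.mpr fun h => ?_
    exact x.2 (by
      obtain ⟨a, ha⟩ := (hS x.1).mp h.symm
      exact ⟨a, ha⟩)
  set ca : ℝ := Complex.abs cc with hcadef
  have hca0 : 0 < ca := by
    rw [hcadef, AbsoluteValue.pos_iff]; exact hcc
  set D₁ : ℝ := Complex.abs lam1 + Lam + Dd + CL1 + 1 with hD₁def
  have hD₁1 : 1 ≤ D₁ := by
    have h1 : 0 ≤ Complex.abs lam1 := AbsoluteValue.nonneg _ _
    simp only [hD₁def]; linarith
  have hD₁0 : 0 < D₁ := lt_of_lt_of_le one_pos hD₁1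
  set γ : ℝ := min 1 (δ/4) with hγdef
  have hγ0 : 0 < γ := lt_min one_pos (by linarith)
  have hγ1 : γ ≤ 1 := min_le_left _ _
  have hγδ : γ ≤ δ/4 := min_le_right _ _
  set γ2 : ℝ := (min 1 (2*d/3)) ^ k with hγ2def
  have hγ2b0 : 0 < min 1 (2*d/3) := lt_min one_pos (by linarith)
  have hγ20 : 0 < γ2 := pow_pos hγ2b0 k
  set C : ℝ := K / (ca * γ2) with hCdef
  have hC0 : 0 < C := div_pos hK0 (mul_pos hca0 hγ20)
  -- entry bounds for Nmat
  have hNb : ∀ (ε' μ : ℂ), Complex.abs ε' ≤ 1 → Complex.abs μ ≤ Rb →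
      ∀ i j, Complex.abs (PertAux.Nmat L0 L1 lam1 e ε' μ i j) ≤ r₀ := by
    intro ε' μ hε' hμ i j
    have hite : ∀ (c : Prop) [Decidable c],
        Complex.abs (μ * (if c then (1:ℂ) else 0)) ≤ Rb := by
      intro c hc
      by_cases h : c
      · simp only [if_pos h, mul_one]
        exact hμ
      · simp only [if_neg h, mul_zero, AbsoluteValue.map_zero]
        exact hRb0.le
    have hA : Complex.abs (μ * (if i = j then (1:ℂ) else 0) - L1 i j) ≤ Rb + CL1 := by
      calc Complex.abs (μ * (if i = j then (1:ℂ) else 0) - L1 i j)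
          ≤ Complex.abs (μ * (if i = j then (1:ℂ) else 0)) + Complex.abs (L1 i j) := by
            exact Complex.abs.sub_le_add _ _
        _ ≤ Rb + CL1 := add_le_add (hite _) (hL1entry i j)
    simp only [PertAux.Nmat, Matrix.of_apply]
    by_cases hP : ∃ a, e a = i
    · rw [if_pos hP]
      calc Complex.abs (μ * (if i = j then (1:ℂ) else 0) - L1 i j) ≤ Rb + CL1 := hA
        _ ≤ r₀ := by
            have h1 : 0 ≤ Complex.abs lam1 := AbsoluteValue.nonneg _ _
            simp only [hr₀def]; linarith
    · rw [if_neg hP]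
      have h1 : Complex.abs ((lam1 - L0 i i) * (if i = j then (1:ℂ) else 0))
          ≤ Complex.abs lam1 + Dd := by
        by_cases h : i = j
        · simp only [if_pos h, mul_one]
          calc Complex.abs (lam1 - L0 i i) ≤ Complex.abs lam1 + Complex.abs (L0 i i) :=
              Complex.abs.sub_le_add _ _
            _ ≤ Complex.abs lam1 + Dd := by linarith [hL0entry i]
        · simp only [if_neg h, mul_zero, AbsoluteValue.map_zero]
          linarith [AbsoluteValue.nonneg Complex.abs lam1, hDd]
      calc Complex.abs _
          ≤ Complex.abs ((lam1 - L0 i i) * (if i = j then (1:ℂ) else 0))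
            + Complex.abs (ε' * (μ * (if i = j then (1:ℂ) else 0) - L1 i j)) :=
            Complex.abs.add_le _ _
        _ ≤ (Complex.abs lam1 + Dd) + 1 * (Rb + CL1) := by
            refine add_le_add h1 ?_
            rw [AbsoluteValue.map_mul]
            exact mul_le_mul hε' hA (AbsoluteValue.nonneg _ _) zero_le_one
        _ ≤ r₀ := by simp only [hr₀def]; linarith
  -- Lipschitz bound
  have hLip : ∀ (ε' μ : ℂ), Complex.abs ε' ≤ 1 → Complex.abs μ ≤ Rb →
      Complex.abs ((PertAux.Nmat L0 L1 lam1 e ε' μ).det - (PertAux.Nmat L0 L1 lam1 e 0 μ).det)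
        ≤ K * Complex.abs ε' := by
    intro ε' μ hε' hμ
    have hdiff : ∀ i j, Complex.abs (PertAux.Nmat L0 L1 lam1 e ε' μ i j
        - PertAux.Nmat L0 L1 lam1 e 0 μ i j) ≤ Complex.abs ε' * (Rb + CL1) := by
      intro i j
      simp only [PertAux.Nmat, Matrix.of_apply]
      by_cases hP : ∃ a, e a = i
      · rw [if_pos hP, if_pos hP, sub_self, AbsoluteValue.map_zero]
        exact mul_nonneg (AbsoluteValue.nonneg _ _) (by linarith)
      · rw [if_neg hP, if_neg hP]
        have : (lam1 - L0 i i) * (if i = j then (1:ℂ) else 0)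
            + ε' * (μ * (if i = j then (1:ℂ) else 0) - L1 i j)
            - ((lam1 - L0 i i) * (if i = j then (1:ℂ) else 0)
              + 0 * (μ * (if i = j then (1:ℂ) else 0) - L1 i j))
            = ε' * (μ * (if i = j then (1:ℂ) else 0) - L1 i j) := by ring
        rw [this, AbsoluteValue.map_mul]
        refine mul_le_mul_of_nonneg_left ?_ (AbsoluteValue.nonneg _ _)
        calc Complex.abs (μ * (if i = j then (1:ℂ) else 0) - L1 i j)
            ≤ Complex.abs (μ * (if i = j then (1:ℂ) else 0)) + Complex.abs (L1 i j) :=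
              Complex.abs.sub_le_add _ _
          _ ≤ Rb + CL1 := by
              refine add_le_add ?_ (hL1entry i j)
              by_cases h : i = j
              · simp only [if_pos h, mul_one]
                exact hμ
              · simp only [if_neg h, mul_zero, AbsoluteValue.map_zero]
                exact hRb0.le
    have h0' : ∀ i j, Complex.abs (PertAux.Nmat L0 L1 lam1 e 0 μ i j) ≤ r₀ := by
      intro i j
      exact hNb 0 μ (by simp) hμ i j
    have := PertAux.abs_det_sub_det_le (PertAux.Nmat L0 L1 lam1 e ε' μ)
      (PertAux.Nmat L0 L1 lam1 e 0 μ) (le_of_lt hr₀0)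
      (mul_nonneg (AbsoluteValue.nonneg _ _) (by linarith) : (0:ℝ) ≤ Complex.abs ε' * (Rb + CL1))
      (hNb ε' μ hε' hμ) h0' hdiff
    calc Complex.abs _ ≤ Kp * (m * (Complex.abs ε' * (Rb + CL1)) * r₀ ^ (m - 1)) := this
      _ = Kp * m * (Rb + CL1) * r₀ ^ (m - 1) * Complex.abs ε' := by ring
      _ ≤ K * Complex.abs ε' := by
          refine mul_le_mul_of_nonneg_right ?_ (AbsoluteValue.nonneg _ _)
          simp only [hKdef]; linarith
  -- determinant of N at ε = 0
  have hq : ∀ μ : ℂ, (L1.submatrix e e).charpoly.eval μ = ∏ i, (μ - lamt i) := by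
    intro μ
    conv_lhs => rw [(IsAlgClosed.splits (L1.submatrix e e).charpoly).eq_prod_roots_of_monic
      (Matrix.charpoly_monic _)]
    rw [Polynomial.eval_multiset_prod, Multiset.map_map, hroots, Multiset.map_map,
      Finset.prod_eq_multiset_prod]
    refine congrArg Multiset.prod (Multiset.map_congr rfl fun a _ => ?_)
    simp
  have hN0 : ∀ μ : ℂ, (PertAux.Nmat L0 L1 lam1 e 0 μ).det = cc * ∏ i, (μ - lamt i) := by
    intro μ
    rw [PertAux.det_Nmat_zero, hq]
  -- evaluation identity
  have hev : ∀ (ε' μ : ℂ), ((L0 + ε' • L1).charpoly.eval (lam1 + ε' * μ))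
      = ε' ^ k * (PertAux.Nmat L0 L1 lam1 e ε' μ).det := by
    intro ε' μ
    rw [PertAux.my_eval_charpoly, PertAux.factor_det L0 L1 hdiag lam1 e hS]
  -- ε₀
  set e1 : ℝ := 1 with he1def
  set e2 : ℝ := δ/(2*B) with he2def
  set e3 : ℝ := δ/(4*Lam) with he3def
  set e4 : ℝ := ca/(2*K) with he4def
  set e5 : ℝ := 1/(B+Lam) with he5def
  set e6 : ℝ := ca/(2*((B+Lam)^(k+1) * D₁^m)) with he6def
  set e7 : ℝ := (d/3)^k * γ^m / K with he7def
  set e8 : ℝ := 1/d with he8def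
  set ε₀ : ℝ := min (min (min e1 e2) (min e3 e4)) (min (min e5 e6) (min e7 e8)) with hε₀def
  have hBD0 : 0 < (B+Lam)^(k+1) * D₁^m :=
    mul_pos (pow_pos (by linarith) _) (pow_pos hD₁0 _)
  have hε₀0 : 0 < ε₀ := by
    refine lt_min (lt_min (lt_min ?_ ?_) (lt_min ?_ ?_)) (lt_min (lt_min ?_ ?_) (lt_min ?_ ?_))
    · exact one_pos
    · exact div_pos hδ0 (by linarith)
    · exact div_pos hδ0 (by linarith)
    · exact div_pos hca0 (by linarith)
    · exact div_pos one_pos (by linarith)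
    · exact div_pos hca0 (by linarith)
    · exact div_pos (mul_pos (pow_pos (by linarith : (0:ℝ) < d/3) k) (pow_pos hγ0 m)) hK0
    · exact div_pos one_pos hd0
  clear_value CL1 Lam Dd B Rb r₀ Kp K cc ca D₁ γ γ2 C
  refine ⟨C, hC0, ε₀, hε₀0, ?_⟩
  intro ε hε0 hεlt
  have hεe1 : Complex.abs ε < e1 :=
    lt_of_lt_of_le hεlt (le_trans (min_le_left _ _) (le_trans (min_le_left _ _) (min_le_left _ _)))
  have hεe2 : Complex.abs ε < e2 :=
    lt_of_lt_of_le hεlt (le_trans (min_le_left _ _) (le_trans (min_le_left _ _) (min_le_right _ _)))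
  have hεe3 : Complex.abs ε < e3 :=
    lt_of_lt_of_le hεlt (le_trans (min_le_left _ _) (le_trans (min_le_right _ _) (min_le_left _ _)))
  have hεe4 : Complex.abs ε < e4 :=
    lt_of_lt_of_le hεlt (le_trans (min_le_left _ _) (le_trans (min_le_right _ _) (min_le_right _ _)))
  have hεe5 : Complex.abs ε < e5 :=
    lt_of_lt_of_le hεlt (le_trans (min_le_right _ _) (le_trans (min_le_left _ _) (min_le_left _ _)))
  have hεe6 : Complex.abs ε < e6 :=
    lt_of_lt_of_le hεlt (le_trans (min_le_right _ _) (le_trans (min_le_left _ _) (min_le_right _ _)))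
  have hεe7 : Complex.abs ε < e7 :=
    lt_of_lt_of_le hεlt (le_trans (min_le_right _ _) (le_trans (min_le_right _ _) (min_le_left _ _)))
  have hεe8 : Complex.abs ε < e8 :=
    lt_of_lt_of_le hεlt (le_trans (min_le_right _ _) (le_trans (min_le_right _ _) (min_le_right _ _)))
  have hε1 : Complex.abs ε ≤ 1 := le_of_lt hεe1
  have hεB : Complex.abs ε * B ≤ δ/2 := by
    rw [he2def, lt_div_iff₀ (by linarith : (0:ℝ) < 2*B)] at hεe2
    have heq : Complex.abs ε * (2*B) = 2 * (Complex.abs ε * B) := by ring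
    linarith
  have hεΛ4 : Complex.abs ε * Lam ≤ δ/4 := by
    rw [he3def, lt_div_iff₀ (by linarith : (0:ℝ) < 4*Lam)] at hεe3
    have heq : Complex.abs ε * (4*Lam) = 4 * (Complex.abs ε * Lam) := by ring
    linarith
  have hεK : K * Complex.abs ε ≤ ca/2 := by
    rw [he4def, lt_div_iff₀ (by linarith : (0:ℝ) < 2*K)] at hεe4
    have heq : Complex.abs ε * (2*K) = 2 * (K * Complex.abs ε) := by ring
    linarith
  have hεBΛ : Complex.abs ε * (B + Lam) ≤ 1 := by
    rw [he5def, lt_div_iff₀ (by linarith : (0:ℝ) < B + Lam)] at hεe5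
    linarith
  have hεT : Complex.abs ε * ((B+Lam)^(k+1) * D₁^m) < ca / 2 := by
    have h1 : Complex.abs ε * ((B+Lam)^(k+1) * D₁^m)
        < ca/(2*((B+Lam)^(k+1) * D₁^m)) * ((B+Lam)^(k+1) * D₁^m) :=
      mul_lt_mul_of_pos_right hεe6 hBD0
    have h2 : ca/(2*((B+Lam)^(k+1) * D₁^m)) * ((B+Lam)^(k+1) * D₁^m) = ca / 2 := by
      field_simp
    rw [h2] at h1
    exact h1
  have hεS : K * Complex.abs ε < (d/3)^k * γ^m := by
    rw [he7def, lt_div_iff₀ hK0] at hεe7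
    have heq : Complex.abs ε * K = K * Complex.abs ε := by ring
    linarith
  have hεd : Complex.abs ε * d ≤ 1 := by
    rw [he8def] at hεe8
    have h1 : Complex.abs ε * d < (1/d) * d := mul_lt_mul_of_pos_right hεe8 hd0
    rw [one_div, inv_mul_cancel₀ (ne_of_gt hd0)] at h1
    exact h1.le
  -- the perturbed characteristic polynomial
  set p : Polynomial ℂ := (L0 + ε • L1).charpoly with hpdef
  have hpm : p.Monic := Matrix.charpoly_monic _
  have hp0 : p ≠ 0 := hpm.ne_zero
  have hpdeg : p.natDegree = m := by
    rw [hpdef, Matrix.charpoly_natDegree_eq_dim, Fintype.card_fin]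
  have hcardR : Multiset.card p.roots = m := by
    rw [(Polynomial.splits_iff_card_roots).mp (IsAlgClosed.splits p), hpdeg]
  have habs_eval : ∀ z, Complex.abs (p.eval z)
      = ((p.roots.map fun a => Complex.abs (z - a)).prod) :=
    fun z => PertAux.abs_eval_eq_prod hpm z
  -- location of roots
  have hloc : ∀ ν ∈ p.roots, ∃ i, Complex.abs (ν - L0 i i) ≤ Complex.abs ε * CL1 := by
    intro ν hν
    have hev0 : p.eval ν = 0 := (Polynomial.mem_roots hp0).mp hν
    have hdet : (ν • (1 : Matrix (Fin m) (Fin m) ℂ) - (L0 + ε • L1)).det = 0 := by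
      rw [← PertAux.my_eval_charpoly]
      exact hev0
    rw [hCL1def]
    exact PertAux.root_near_diag hm L0 L1 hdiag ε ν hdet
  have hdich : ∀ ν ∈ p.roots, Complex.abs (ν - lam1) ≤ Complex.abs ε * B
      ∨ δ/2 ≤ Complex.abs (ν - lam1) := by
    intro ν hν
    obtain ⟨i, hi⟩ := hloc ν hν
    rcases hδ i with hl | hr
    · left
      rw [hl] at hi
      calc Complex.abs (ν - lam1) ≤ Complex.abs ε * CL1 := hi
        _ ≤ Complex.abs ε * B := mul_le_mul_of_nonneg_left hCL1B (AbsoluteValue.nonneg _ _)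
    · right
      have htri : Complex.abs (L0 i i - lam1)
          ≤ Complex.abs (L0 i i - ν) + Complex.abs (ν - lam1) := Complex.abs.sub_le _ _ _
      have hsymm : Complex.abs (L0 i i - ν) = Complex.abs (ν - L0 i i) :=
        Complex.abs.map_sub _ _
      have hεCL1 : Complex.abs ε * CL1 ≤ δ/2 := le_trans
        (mul_le_mul_of_nonneg_left hCL1B (AbsoluteValue.nonneg _ _)) hεB
      linarith [hi, hr]
  have hbound : ∀ ν ∈ p.roots, Complex.abs ν ≤ Dd + CL1 := by
    intro ν hν
    obtain ⟨i, hi⟩ := hloc ν hν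
    have : Complex.abs ν ≤ Complex.abs (ν - L0 i i) + Complex.abs (L0 i i) := by
      calc Complex.abs ν = Complex.abs ((ν - L0 i i) + L0 i i) :=
            congrArg Complex.abs (by ring)
        _ ≤ _ := Complex.abs.add_le _ _
    have h2 : Complex.abs ε * CL1 ≤ CL1 := by
      have := mul_le_mul_of_nonneg_right hε1 hCL1
      linarith
    linarith [hL0entry i]
  -- near and far roots
  set nearP : ℂ → Prop := fun ν => Complex.abs (ν - lam1) ≤ Complex.abs ε * B with hnearPdef
  set near : Multiset ℂ := p.roots.filter nearP with hneardef
  set far : Multiset ℂ := p.roots.filter (fun ν => ¬ nearP ν) with hfardef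
  have hsplit : near + far = p.roots := Multiset.filter_add_not _ _
  set t : ℕ := Multiset.card near with htdef
  have htm : t + Multiset.card far = m := by
    rw [htdef, ← Multiset.card_add, hsplit, hcardR]
  have hfarlb : ∀ ν ∈ far, δ/2 ≤ Complex.abs (ν - lam1) := by
    intro ν hν
    have hνR : ν ∈ p.roots := Multiset.mem_of_mem_filter hν
    have hνnot : ¬ nearP ν := (Multiset.mem_filter.mp hν).2
    rcases hdich ν hνR with h | h
    · exact absurd h hνnot
    · exact h
  -- step T : t ≤ k
  have hT : t ≤ k := by
    by_contra hcon
    push_neg at hcon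
    have hk1t : k + 1 ≤ t := hcon
    set w : ℂ := (Lam : ℂ) with hwdef
    have hwabs : Complex.abs w = Lam := by
      rw [hwdef, Complex.abs_ofReal, abs_of_pos hLam0]
    have hwRb : Complex.abs w ≤ Rb := by
      rw [hwabs, hRbdef]; linarith
    -- lower bound
    have hprodw : (1:ℝ) ≤ Complex.abs (∏ i, (w - lamt i)) := by
      rw [map_prod]
      calc (1:ℝ) = ∏ _i : Fin k, (1:ℝ) := by simp
        _ ≤ ∏ i, Complex.abs (w - lamt i) := by
            refine Finset.prod_le_prod (fun i _ => zero_le_one) (fun i _ => ?_)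
            have h9 : Complex.abs w - Complex.abs (lamt i) ≤ Complex.abs (w - lamt i) :=
              Complex.abs.le_sub w (lamt i)
            rw [hwabs] at h9
            linarith [hlamt i]
    have hlow : ca/2 ≤ Complex.abs ((PertAux.Nmat L0 L1 lam1 e ε w).det) := by
      have h0 : ca ≤ Complex.abs ((PertAux.Nmat L0 L1 lam1 e 0 w).det) := by
        rw [hN0 w, AbsoluteValue.map_mul, ← hcadef]
        calc ca = ca * 1 := (mul_one ca).symm
          _ ≤ ca * Complex.abs (∏ i, (w - lamt i)) :=
            mul_le_mul_of_nonneg_left hprodw (le_of_lt hca0)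
      have hl := hLip ε w hε1 hwRb
      have htri : Complex.abs ((PertAux.Nmat L0 L1 lam1 e 0 w).det)
          - Complex.abs ((PertAux.Nmat L0 L1 lam1 e ε w).det)
          ≤ Complex.abs ((PertAux.Nmat L0 L1 lam1 e 0 w).det
            - (PertAux.Nmat L0 L1 lam1 e ε w).det) :=
        Complex.abs.le_sub _ _
      have habs2 : Complex.abs ((PertAux.Nmat L0 L1 lam1 e 0 w).det
          - (PertAux.Nmat L0 L1 lam1 e ε w).det) ≤ K * Complex.abs ε := by
        rw [← AbsoluteValue.map_neg]
        simpa [neg_sub] using hl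
      linarith [hεK]
    have hlowp : Complex.abs ε ^ k * (ca/2) ≤ Complex.abs (p.eval (lam1 + ε * w)) := by
      rw [hpdef, hev ε w, AbsoluteValue.map_mul, map_pow]
      exact mul_le_mul_of_nonneg_left hlow (pow_nonneg (AbsoluteValue.nonneg _ _) k)
    -- upper bound
    have hup : Complex.abs (p.eval (lam1 + ε * w))
        ≤ (Complex.abs ε * (B + Lam))^(k+1) * D₁^m := by
      rw [habs_eval, ← hsplit, Multiset.map_add, Multiset.prod_add]
      have hnear_le : ∀ x ∈ near.map (fun a => Complex.abs (lam1 + ε * w - a)),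
          x ≤ Complex.abs ε * (B + Lam) := by
        intro x hx
        obtain ⟨a, ha, rfl⟩ := Multiset.mem_map.mp hx
        have hanear : Complex.abs (a - lam1) ≤ Complex.abs ε * B := (Multiset.mem_filter.mp ha).2
        calc Complex.abs (lam1 + ε * w - a) = Complex.abs (ε * w - (a - lam1)) :=
              congrArg Complex.abs (by ring)
          _ ≤ Complex.abs (ε * w) + Complex.abs (a - lam1) := Complex.abs.sub_le_add _ _
          _ ≤ Complex.abs ε * Lam + Complex.abs ε * B := by
              rw [AbsoluteValue.map_mul, hwabs]
              exact add_le_add (le_refl _) hanear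
          _ = Complex.abs ε * (B + Lam) := by ring
      have hfar_le : ∀ x ∈ far.map (fun a => Complex.abs (lam1 + ε * w - a)), x ≤ D₁ := by
        intro x hx
        obtain ⟨a, ha, rfl⟩ := Multiset.mem_map.mp hx
        have haR : a ∈ p.roots := Multiset.mem_of_mem_filter ha
        calc Complex.abs (lam1 + ε * w - a)
            ≤ Complex.abs (lam1 + ε * w) + Complex.abs a := Complex.abs.sub_le_add _ _
          _ ≤ (Complex.abs lam1 + Complex.abs ε * Lam) + (Dd + CL1) := by
              refine add_le_add (le_trans (Complex.abs.add_le _ _) ?_) (hbound a haR)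
              rw [AbsoluteValue.map_mul, hwabs]
          _ ≤ D₁ := by
              have : Complex.abs ε * Lam ≤ Lam := by
                have := mul_le_mul_of_nonneg_right hε1 hLam0.le
                linarith
              simp only [hD₁def]; linarith
      have h1 := PertAux.multiset_prod_le (near.map fun a => Complex.abs (lam1 + ε * w - a))
        (mul_nonneg (AbsoluteValue.nonneg _ _) (by linarith)) (fun x hx => by
          obtain ⟨a, _, rfl⟩ := Multiset.mem_map.mp hx
          exact AbsoluteValue.nonneg _ _) hnear_le
      have h2 := PertAux.multiset_prod_le (far.map fun a => Complex.abs (lam1 + ε * w - a))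
        hD₁0.le (fun x hx => by
          obtain ⟨a, _, rfl⟩ := Multiset.mem_map.mp hx
          exact AbsoluteValue.nonneg _ _) hfar_le
      rw [Multiset.card_map] at h1 h2
      have hεBL0 : (0:ℝ) ≤ Complex.abs ε * (B + Lam) :=
        mul_nonneg (AbsoluteValue.nonneg _ _) (by linarith)
      have h3 : (Complex.abs ε * (B + Lam)) ^ t ≤ (Complex.abs ε * (B + Lam)) ^ (k+1) :=
        pow_le_pow_of_le_one hεBL0 hεBΛ hk1t
      have h4 : D₁ ^ Multiset.card far ≤ D₁ ^ m :=
        pow_le_pow_right₀ hD₁1 (by omega)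
      calc (near.map fun a => Complex.abs (lam1 + ε * w - a)).prod
            * (far.map fun a => Complex.abs (lam1 + ε * w - a)).prod
          ≤ (Complex.abs ε * (B + Lam)) ^ t * D₁ ^ Multiset.card far := by
            refine mul_le_mul h1 h2 ?_ (pow_nonneg hεBL0 t)
            exact Multiset.prod_nonneg fun x hx => by
              obtain ⟨a, _, rfl⟩ := Multiset.mem_map.mp hx
              exact AbsoluteValue.nonneg _ _
        _ ≤ (Complex.abs ε * (B + Lam)) ^ (k+1) * D₁ ^ m :=
            mul_le_mul h3 h4 (pow_nonneg hD₁0.le _) (pow_nonneg hεBL0 _)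
    have hfinal : Complex.abs ε ^ k * (ca/2)
        ≤ Complex.abs ε ^ k * (Complex.abs ε * ((B+Lam)^(k+1) * D₁^m)) := by
      calc Complex.abs ε ^ k * (ca/2) ≤ (Complex.abs ε * (B + Lam))^(k+1) * D₁^m :=
            le_trans hlowp hup
        _ = Complex.abs ε ^ k * (Complex.abs ε * ((B+Lam)^(k+1) * D₁^m)) := by
            rw [mul_pow, pow_succ]
            ring
    have hpowpos : 0 < Complex.abs ε ^ k := pow_pos hε0 k
    have := le_of_mul_le_mul_left hfinal hpowpos
    linarith [hεT]
  -- step S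
  have hstepS : ∀ j : Fin k, ∃ ν ∈ p.roots,
      Complex.abs (ν - (lam1 + ε * lamt j)) ≤ Complex.abs ε * (d/3) := by
    intro j
    by_contra hcon
    push_neg at hcon
    set zj : ℂ := lam1 + ε * lamt j with hzjdef
    -- lower bound on |p(zj)|
    have hlow : (d/3)^k * γ^m * Complex.abs ε ^ k ≤ Complex.abs (p.eval zj) := by
      rw [habs_eval, ← hsplit, Multiset.map_add, Multiset.prod_add]
      have h1 := PertAux.le_multiset_prod (near.map fun a => Complex.abs (zj - a))
        (mul_nonneg (AbsoluteValue.nonneg _ _) (by linarith) :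
          (0:ℝ) ≤ Complex.abs ε * (d/3)) (fun x hx => by
          obtain ⟨a, ha, rfl⟩ := Multiset.mem_map.mp hx
          have h9 := hcon a (Multiset.mem_of_mem_filter ha)
          have h10 : Complex.abs (zj - a) = Complex.abs (a - zj) := Complex.abs.map_sub _ _
          linarith)
      have h2 := PertAux.le_multiset_prod (far.map fun a => Complex.abs (zj - a))
        ((by linarith) : (0:ℝ) ≤ δ/4) (fun x hx => by
          obtain ⟨a, ha, rfl⟩ := Multiset.mem_map.mp hx
          have hfar2 : δ/2 ≤ Complex.abs (a - lam1) := hfarlb a ha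
          have : Complex.abs (a - lam1) - Complex.abs (ε * lamt j)
              ≤ Complex.abs (zj - a) := by
            have htri : Complex.abs (a - lam1)
                ≤ Complex.abs (a - zj) + Complex.abs (zj - lam1) :=
              Complex.abs.sub_le _ _ _
            have h5 : Complex.abs (zj - lam1) = Complex.abs (ε * lamt j) := by
              rw [hzjdef]
              exact congrArg Complex.abs (by ring)
            have h6 : Complex.abs (a - zj) = Complex.abs (zj - a) :=
              Complex.abs.map_sub _ _
            linarith
          have h7 : Complex.abs (ε * lamt j) ≤ δ/4 := by
            rw [AbsoluteValue.map_mul]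
            calc Complex.abs ε * Complex.abs (lamt j) ≤ Complex.abs ε * Lam :=
                  mul_le_mul_of_nonneg_left (by linarith [hlamt j])
                    (AbsoluteValue.nonneg _ _)
              _ ≤ δ/4 := hεΛ4
          linarith)
      rw [Multiset.card_map] at h1 h2
      have hεd30 : (0:ℝ) ≤ Complex.abs ε * (d/3) :=
        mul_nonneg (AbsoluteValue.nonneg _ _) (by linarith)
      have h3 : (Complex.abs ε * (d/3))^k ≤ (Complex.abs ε * (d/3))^t := by
        refine pow_le_pow_of_le_one hεd30 ?_ hT
        have heq : Complex.abs ε * (d/3) = (Complex.abs ε * d)/3 := by ring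
        linarith
      have h4 : γ^m ≤ (δ/4) ^ Multiset.card far := by
        calc γ^m ≤ γ ^ Multiset.card far :=
              pow_le_pow_of_le_one hγ0.le hγ1 (by omega)
          _ ≤ (δ/4) ^ Multiset.card far := pow_le_pow_left₀ hγ0.le hγδ _
      calc (d/3)^k * γ^m * Complex.abs ε ^ k
          = (Complex.abs ε * (d/3))^k * γ^m := by rw [mul_pow]; ring
        _ ≤ (Complex.abs ε * (d/3))^t * (δ/4) ^ Multiset.card far :=
            mul_le_mul h3 h4 (pow_nonneg hγ0.le m) (pow_nonneg hεd30 t)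
        _ ≤ _ := mul_le_mul h1 h2 (pow_nonneg (by linarith : (0:ℝ) ≤ δ/4) _)
            (Multiset.prod_nonneg fun x hx => by
            obtain ⟨a, _, rfl⟩ := Multiset.mem_map.mp hx
            exact AbsoluteValue.nonneg _ _)
    -- upper bound on |p(zj)|
    have hup : Complex.abs (p.eval zj) ≤ K * Complex.abs ε * Complex.abs ε ^ k := by
      have hlRb : Complex.abs (lamt j) ≤ Rb := by
        have := hlamt j
        rw [hRbdef]; linarith
      have hN0z : (PertAux.Nmat L0 L1 lam1 e 0 (lamt j)).det = 0 := by
        rw [hN0]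
        have : (∏ i, (lamt j - lamt i)) = 0 :=
          Finset.prod_eq_zero (Finset.mem_univ j) (sub_self _)
        rw [this, mul_zero]
      have hl := hLip ε (lamt j) hε1 hlRb
      rw [hN0z, sub_zero] at hl
      rw [hpdef, hzjdef, hev ε (lamt j), AbsoluteValue.map_mul, map_pow]
      calc Complex.abs ε ^ k * Complex.abs ((PertAux.Nmat L0 L1 lam1 e ε (lamt j)).det)
          ≤ Complex.abs ε ^ k * (K * Complex.abs ε) :=
            mul_le_mul_of_nonneg_left hl (pow_nonneg (AbsoluteValue.nonneg _ _) k)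
        _ = K * Complex.abs ε * Complex.abs ε ^ k := by ring
    have hpowpos : 0 < Complex.abs ε ^ k := pow_pos hε0 k
    have hcomb : (d/3)^k * γ^m * Complex.abs ε ^ k
        ≤ K * Complex.abs ε * Complex.abs ε ^ k := le_trans hlow hup
    have := le_of_mul_le_mul_right hcomb hpowpos
    linarith [hεS]
  -- counting: each ball contains exactly one root
  set ballp : Fin k → ℂ → Prop := fun j' x =>
    Complex.abs (x - (lam1 + ε * lamt j')) ≤ Complex.abs ε * (d/3) with hballpdef
  have hball_near : ∀ j' x, ballp j' x → nearP x := by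
    intro j' x hx
    have h1 : Complex.abs (x - lam1)
        ≤ Complex.abs (x - (lam1 + ε * lamt j')) + Complex.abs (ε * lamt j') := by
      have := Complex.abs.sub_le x (lam1 + ε * lamt j') lam1
      simpa [add_sub_cancel_left] using this
    have h2 : Complex.abs (ε * lamt j') ≤ Complex.abs ε * Lam := by
      rw [AbsoluteValue.map_mul]
      exact mul_le_mul_of_nonneg_left (by linarith [hlamt j']) (AbsoluteValue.nonneg _ _)
    simp only [hnearPdef]
    have : Complex.abs ε * (d/3) + Complex.abs ε * Lam ≤ Complex.abs ε * B := by
      have hstep : d/3 + Lam ≤ B := by rw [hBdef]; linarith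
      have hmul := mul_le_mul_of_nonneg_left hstep (AbsoluteValue.nonneg Complex.abs ε)
      have heq := mul_add (Complex.abs ε) (d/3) Lam
      linarith
    linarith [hx]
  have hdisj : ∀ j₁ ∈ (Finset.univ : Finset (Fin k)), ∀ j₂ ∈ (Finset.univ : Finset (Fin k)),
      j₁ ≠ j₂ → ∀ x, ballp j₁ x → ballp j₂ x → False := by
    intro j₁ _ j₂ _ hne x h1 h2
    have hzz : Complex.abs ((lam1 + ε * lamt j₁) - (lam1 + ε * lamt j₂))
        = Complex.abs ε * Complex.abs (lamt j₁ - lamt j₂) := by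
      rw [← AbsoluteValue.map_mul]
      exact congrArg Complex.abs (by ring)
    have hd' : Complex.abs ε * d ≤ Complex.abs ε * Complex.abs (lamt j₁ - lamt j₂) :=
      mul_le_mul_of_nonneg_left (hdsep j₁ j₂ hne) (AbsoluteValue.nonneg _ _)
    have htri : Complex.abs ((lam1 + ε * lamt j₁) - (lam1 + ε * lamt j₂))
        ≤ Complex.abs ((lam1 + ε * lamt j₁) - x) + Complex.abs (x - (lam1 + ε * lamt j₂)) :=
      Complex.abs.sub_le _ _ _
    have hsym : Complex.abs ((lam1 + ε * lamt j₁) - x) = Complex.abs (x - (lam1 + ε * lamt j₁)) :=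
      Complex.abs.map_sub _ _
    have hεd0 : 0 < Complex.abs ε * d := mul_pos hε0 hd0
    have heq : Complex.abs ε * (d/3) = (Complex.abs ε * d)/3 := by ring
    linarith [h1, h2]
  have hsum : ∑ j' : Fin k, Multiset.card (p.roots.filter (ballp j')) ≤ k := by
    have h1 : ∀ j', p.roots.filter (ballp j') = near.filter (ballp j') := by
      intro j'
      rw [hneardef, Multiset.filter_filter]
      refine (Multiset.filter_congr fun x _ => ?_).symm
      constructor
      · intro ⟨h, _⟩; exact h
      · intro h; exact ⟨h, hball_near j' x h⟩
    calc ∑ j' : Fin k, Multiset.card (p.roots.filter (ballp j'))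
        = ∑ j' : Fin k, Multiset.card (near.filter (ballp j')) := by
          refine Finset.sum_congr rfl fun j' _ => ?_
          rw [h1 j']
      _ ≤ Multiset.card near := PertAux.sum_card_filter_le near Finset.univ ballp hdisj
      _ ≤ k := hT
  have hs1 : ∀ j' : Fin k, 1 ≤ Multiset.card (p.roots.filter (ballp j')) := by
    intro j'
    obtain ⟨ν, hνR, hνb⟩ := hstepS j'
    have : ν ∈ p.roots.filter (ballp j') := Multiset.mem_filter.mpr ⟨hνR, hνb⟩
    exact Multiset.card_pos_iff_exists_mem.mpr ⟨ν, this⟩ 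
  -- final: for each j
  intro j
  obtain ⟨ν, hνR, hνb⟩ := hstepS j
  have hsj : Multiset.card (p.roots.filter (ballp j)) = 1 := by
    by_contra hne
    have h2 : 2 ≤ Multiset.card (p.roots.filter (ballp j)) := by
      have := hs1 j
      omega
    have hk1 : 1 ≤ k := j.pos
    have hsum2 : ∑ j' : Fin k, Multiset.card (p.roots.filter (ballp j'))
        = Multiset.card (p.roots.filter (ballp j))
          + ∑ j' ∈ Finset.univ.erase j, Multiset.card (p.roots.filter (ballp j')) :=
      (Finset.add_sum_erase _ _ (Finset.mem_univ j)).symm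
    have hsum3 : (Finset.univ.erase j).card
        ≤ ∑ j' ∈ Finset.univ.erase j, Multiset.card (p.roots.filter (ballp j')) := by
      calc (Finset.univ.erase j).card = ∑ _j' ∈ Finset.univ.erase j, 1 := by
            rw [Finset.sum_const, smul_eq_mul, mul_one]
        _ ≤ _ := Finset.sum_le_sum fun j' _ => hs1 j'
    have hcard : (Finset.univ.erase j).card = k - 1 := by
      rw [Finset.card_erase_of_mem (Finset.mem_univ j), Finset.card_univ, Fintype.card_fin]
    omega
  have hcount : p.roots.count ν = 1 := by
    have h1 : p.roots.count ν = (p.roots.filter (ballp j)).count ν :=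
      (Multiset.count_filter_of_pos (p := ballp j) (show ballp j ν from hνb)).symm
    have h2 : (p.roots.filter (ballp j)).count ν ≤ 1 :=
      le_of_le_of_eq (Multiset.count_le_card _ _) hsj
    have h3 : 1 ≤ p.roots.count ν := Multiset.one_le_count_iff_mem.mpr hνR
    omega
  refine ⟨ν, ?_, ?_⟩
  · exact (Polynomial.count_roots p).symm.trans hcount
  -- the quadratic estimate
  · have hεne : ε ≠ 0 := by
      intro h
      rw [h] at hε0
      simp at hε0
    set μ : ℂ := (ν - lam1) / ε with hμdef
    have hνμ : ν = lam1 + ε * μ := by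
      rw [hμdef]
      field_simp
      ring
    have hballdiff : ν - (lam1 + ε * lamt j) = ε * (μ - lamt j) := by
      rw [hνμ]; ring
    have hμj : Complex.abs (μ - lamt j) ≤ d/3 := by
      have h1 : Complex.abs ε * Complex.abs (μ - lamt j) ≤ Complex.abs ε * (d/3) := by
        rw [← AbsoluteValue.map_mul, ← hballdiff]
        exact hνb
      exact le_of_mul_le_mul_left h1 hε0
    have hμRb : Complex.abs μ ≤ Rb := by
      have h1 : Complex.abs μ ≤ Complex.abs (μ - lamt j) + Complex.abs (lamt j) := by
        have := Complex.abs.sub_le μ (lamt j) 0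
        simpa [sub_zero] using this
      have := hlamt j
      rw [hRbdef, hBdef]
      linarith
    have hdet0 : (PertAux.Nmat L0 L1 lam1 e ε μ).det = 0 := by
      have hev0 : p.eval ν = 0 := (Polynomial.mem_roots hp0).mp hνR
      rw [hpdef, hνμ, hev ε μ] at hev0
      rcases mul_eq_zero.mp hev0 with h | h
      · exact absurd h (pow_ne_zero k hεne)
      · exact h
    have hN0μ : Complex.abs ((PertAux.Nmat L0 L1 lam1 e 0 μ).det) ≤ K * Complex.abs ε := by
      have hl := hLip ε μ hε1 hμRb
      rw [hdet0, zero_sub, AbsoluteValue.map_neg] at hl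
      exact hl
    have hprodlb : ca * (Complex.abs (μ - lamt j) * γ2)
        ≤ Complex.abs ((PertAux.Nmat L0 L1 lam1 e 0 μ).det) := by
      rw [hN0 μ, AbsoluteValue.map_mul, map_prod, ← hcadef]
      refine mul_le_mul_of_nonneg_left ?_ hca0.le
      have hfactor : ∏ i, Complex.abs (μ - lamt i)
          = Complex.abs (μ - lamt j) * ∏ i ∈ Finset.univ.erase j, Complex.abs (μ - lamt i) := by
        rw [← Finset.mul_prod_erase Finset.univ _ (Finset.mem_univ j)]
      rw [hfactor]
      refine mul_le_mul_of_nonneg_left ?_ (AbsoluteValue.nonneg _ _)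
      have herase : ∀ i ∈ Finset.univ.erase j, min 1 (2*d/3) ≤ Complex.abs (μ - lamt i) := by
        intro i hi
        have hij : i ≠ j := Finset.ne_of_mem_erase hi
        have h1 : d ≤ Complex.abs (lamt i - lamt j) := hdsep i j hij
        have h2 : Complex.abs (lamt i - lamt j)
            ≤ Complex.abs (lamt i - μ) + Complex.abs (μ - lamt j) := Complex.abs.sub_le _ _ _
        have h3 : Complex.abs (lamt i - μ) = Complex.abs (μ - lamt i) :=
          Complex.abs.map_sub _ _
        have : 2*d/3 ≤ Complex.abs (μ - lamt i) := by linarith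
        exact le_trans (min_le_right _ _) this
      calc γ2 = (min 1 (2*d/3)) ^ k := hγ2def
        _ ≤ (min 1 (2*d/3)) ^ (Finset.univ.erase j).card := by
            refine pow_le_pow_of_le_one hγ2b0.le (min_le_left _ _) ?_
            rw [Finset.card_erase_of_mem (Finset.mem_univ j), Finset.card_univ, Fintype.card_fin]
            omega
        _ ≤ ∏ i ∈ Finset.univ.erase j, Complex.abs (μ - lamt i) := by
            rw [← Finset.prod_const]
            exact Finset.prod_le_prod (fun i _ => hγ2b0.le) herase
    have hμjC : Complex.abs (μ - lamt j) ≤ C * Complex.abs ε := by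
      have h1 : ca * (Complex.abs (μ - lamt j) * γ2) ≤ K * Complex.abs ε :=
        le_trans hprodlb hN0μ
      rw [hCdef]
      rw [div_mul_eq_mul_div, le_div_iff₀ (mul_pos hca0 hγ20)]
      have heq : ca * (Complex.abs (μ - lamt j) * γ2)
          = Complex.abs (μ - lamt j) * (ca * γ2) := by ring
      linarith
    calc Complex.abs (ν - lam1 - ε * lamt j) = Complex.abs (ε * (μ - lamt j)) := by
          rw [← hballdiff]
          exact congrArg Complex.abs (by ring)
      _ = Complex.abs ε * Complex.abs (μ - lamt j) := AbsoluteValue.map_mul _ _ _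
      _ ≤ Complex.abs ε * (C * Complex.abs ε) :=
          mul_le_mul_of_nonneg_left hμjC (AbsoluteValue.nonneg _ _)
      _ = C * Complex.abs ε ^ 2 := by ring
end

section
/- Let Ω ⊆ ℂ be open and let μ : Ω → ℂ be differentiable on Ω with μ(z)² = z² + 1 and μ(z) ≠ 0 for all z ∈ Ω. Fix λ_n, μ_n ∈ ℂ with μ_n² = λ_n² + 1, and define g(z) = (μ(z) μ_n − z λ_n − 1)/(z − λ_n). Then for every λ ∈ Ω with λ ≠ λ_n, g is differentiable at λ with g'(λ) = (μ_n / (μ(λ)(λ − λ_n))) · g(λ); in other words, the logarithmic derivative of g equals μ_n/(μ(λ)(λ − λ_n)), so (1/μ_n) log g is a local antiderivative of 1/(μ(λ)(λ − λ_n)). -/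
open Complex

/-- let `Ω ⊆ ℂ` be open, `μ : Ω → ℂ` differentiable with `μ(z)² = z² + 1`
and `μ(z) ≠ 0` on `Ω`, and fix `λ_n, μ_n` with `μ_n² = λ_n² + 1`.  Then
`g(z) = (μ(z)μ_n − zλ_n − 1)/(z − λ_n)` is differentiable at every `λ ∈ Ω`, `λ ≠ λ_n`,
with `g'(λ) = (μ_n/(μ(λ)(λ − λ_n))) g(λ)`; i.e. the logarithmic derivative of `g` equals
`μ_n/(μ(λ)(λ − λ_n))`, so `(1/μ_n) log g` is a local antiderivative of
`1/(μ(λ)(λ − λ_n))`. -/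
theorem abel_antiderivative (Ω : Set ℂ) (hΩ : IsOpen Ω) (μ : ℂ → ℂ)
    (hμ : DifferentiableOn ℂ μ Ω)
    (hsq : ∀ z ∈ Ω, μ z ^ 2 = z ^ 2 + 1) (hne : ∀ z ∈ Ω, μ z ≠ 0)
    (lamn mun : ℂ) (hmun : mun ^ 2 = lamn ^ 2 + 1) :
    ∀ lam ∈ Ω, lam ≠ lamn →
      HasDerivAt (fun z : ℂ => (μ z * mun - z * lamn - 1) / (z - lamn))
        ((mun / (μ lam * (lam - lamn)))
          * ((μ lam * mun - lam * lamn - 1) / (lam - lamn))) lam := by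
  intro lam hlam hne'
  have hnmem : Ω ∈ nhds lam := hΩ.mem_nhds hlam
  have hda : DifferentiableAt ℂ μ lam := (hμ.differentiableAt hnmem)
  set c := deriv μ lam with hc
  have hd : HasDerivAt μ c lam := hda.hasDerivAt
  have hm := hne lam hlam
  have hdiff : lam - lamn ≠ 0 := sub_ne_zero.mpr hne'
  -- derivative of μ^2 = z^2 + 1
  have hsqder : HasDerivAt (fun z => μ z ^ 2) (2 * lam) lam := by
    have h1 : HasDerivAt (fun z : ℂ => z ^ 2 + 1) (2 * lam) lam := by
      simpa using ((hasDerivAt_pow 2 lam).add_const 1)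
    apply h1.congr_of_eventuallyEq
    filter_upwards [hnmem] with z hz
    exact hsq z hz
  have hsqder' : HasDerivAt (fun z => μ z ^ 2) (2 * μ lam * c) lam := by
    simpa [mul_comm, mul_assoc, mul_left_comm, pow_one] using hd.fun_pow 2
  have hcval : μ lam * c = lam := by
    have := hsqder'.unique hsqder
    linear_combination this / 2
  -- numerator and denominator derivatives
  have hN : HasDerivAt (fun z : ℂ => μ z * mun - z * lamn - 1)
      (c * mun - 1 * lamn) lam := by
    exact ((hd.mul_const mun).sub ((hasDerivAt_id lam).mul_const lamn)).sub_const 1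
  have hD : HasDerivAt (fun z : ℂ => z - lamn) 1 lam :=
    (hasDerivAt_id lam).sub_const lamn
  have := hN.fun_div hD hdiff
  refine this.congr_deriv (Eq.symm ?_)
  have hs := hsq lam hlam
  field_simp
  ring_nf
  linear_combination μ lam * hmun + mun * hs - (lam - lamn) * mun * hcval
end
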